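/- Let k ≤ l < n be positive integers. Let b₁, …, b_l be orthonormal vectors in ℝⁿ, let R : ℝⁿ → ℝⁿ be an orthogonal linear map, and let d' ∈ ℝⁿ (the transformed displacement vector). Let V := span{R b₁, …, R b_l} ⊆ ℝⁿ, and let W ⊆ ℝⁿ⁺¹ be the linear span of the vectors (R b₁, 0), …, (R b_l, 0) together with (d', 1)/√(1 + ‖d'‖²). Let a₁, …, a_k be orthonormal vectors in ℝⁿ and c ∈ ℝⁿ, and set c̃ := (c, 1)/√(1 + ‖c‖²) ∈ ℝⁿ⁺¹. Then Σᵢ₌₁ᵏ ‖P_V aᵢ − aᵢ‖² + ‖P_W c̃ − c̃‖² = 0 if and only if the linear span of {(a₁, 0), …, (a_k, 0), c̃} in ℝⁿ⁺¹ is contained in W, where P_V and P_W denote the orthogonal projections onto V and W. -/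

import Mathlib

/-- Append a last coordinate `x` to a vector of `ℝⁿ`, yielding a vector of `ℝⁿ⁺¹`. -/
noncomputable def append1 {n : ℕ} (v : EuclideanSpace ℝ (Fin n)) (x : ℝ) :
    EuclideanSpace ℝ (Fin (n + 1)) :=
  (EuclideanSpace.equiv (Fin (n + 1)) ℝ).symm (Fin.snoc ((EuclideanSpace.equiv (Fin n) ℝ) v) x)

/-- The normalized affine embedding `ṽ := (v, 1)/√(1 + ‖v‖²)`. -/
noncomputable def tilde {n : ℕ} (v : EuclideanSpace ℝ (Fin n)) :
    EuclideanSpace ℝ (Fin (n + 1)) :=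
  (Real.sqrt (1 + ‖v‖ ^ 2))⁻¹ • append1 v 1

lemma append1_castSucc {n : ℕ} (v : EuclideanSpace ℝ (Fin n)) (x : ℝ) (j : Fin n) :
    append1 v x (Fin.castSucc j) = v j := by simp [append1]

lemma append1_last {n : ℕ} (v : EuclideanSpace ℝ (Fin n)) (x : ℝ) :
    append1 v x (Fin.last n) = x := by simp [append1]

/-- Append a zero last coordinate, as a linear map. -/
noncomputable def app0L (n : ℕ) :
    EuclideanSpace ℝ (Fin n) →ₗ[ℝ] EuclideanSpace ℝ (Fin (n + 1)) where
  toFun v := append1 v 0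
  map_add' v w := by
    ext i
    induction i using Fin.lastCases with
    | last => simp [append1_last]
    | cast j => simp [append1_castSucc]
  map_smul' t v := by
    ext i
    induction i using Fin.lastCases with
    | last => simp [append1_last]
    | cast j => simp [append1_castSucc]

/-- First `n` coordinates, as a linear map. -/
noncomputable def headL (n : ℕ) :
    EuclideanSpace ℝ (Fin (n + 1)) →ₗ[ℝ] EuclideanSpace ℝ (Fin n) where
  toFun w := WithLp.toLp 2 (fun j => w (Fin.castSucc j))
  map_add' v w := rfl
  map_smul' t v := rfl

/-- Last coordinate, as a linear map. -/
noncomputable def lastL (n : ℕ) : EuclideanSpace ℝ (Fin (n + 1)) →ₗ[ℝ] ℝ where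
  toFun w := w (Fin.last n)
  map_add' v w := rfl
  map_smul' t v := rfl

lemma headL_append1 {n : ℕ} (v : EuclideanSpace ℝ (Fin n)) (x : ℝ) :
    headL n (append1 v x) = v := by
  ext j; exact append1_castSucc v x j

lemma lastL_append1 {n : ℕ} (v : EuclideanSpace ℝ (Fin n)) (x : ℝ) :
    lastL n (append1 v x) = x := by
  exact append1_last v x

lemma mem_W_iff {n l : ℕ} (u : Fin l → EuclideanSpace ℝ (Fin n))
    (d' : EuclideanSpace ℝ (Fin n)) (v : EuclideanSpace ℝ (Fin n)) :
    append1 v 0 ∈ Submodule.span ℝ (Set.range (fun j => append1 (u j) 0) ∪ {tilde d'}) ↔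
      v ∈ Submodule.span ℝ (Set.range u) := by
  have hs : (0:ℝ) < Real.sqrt (1 + ‖d'‖ ^ 2) := by positivity
  constructor
  · intro h
    rw [Submodule.span_union, Submodule.mem_sup] at h
    obtain ⟨y, hy, z, hz, hyz⟩ := h
    rw [Submodule.mem_span_singleton] at hz
    obtain ⟨t, rfl⟩ := hz
    -- last coordinate of y is 0
    have hyl : lastL n y = 0 := by
      have : y ∈ Submodule.span ℝ (Set.range (fun j => append1 (u j) 0)) := hy
      refine Submodule.span_induction ?_ ?_ ?_ ?_ this
      · rintro _ ⟨j, rfl⟩; exact lastL_append1 _ _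
      · simp
      · intro a b _ _ ha hb; simp [map_add, ha, hb]
      · intro r a _ ha; simp [map_smul, ha]
    have hlast : (0:ℝ) = 0 + t * (Real.sqrt (1 + ‖d'‖ ^ 2))⁻¹ := by
      have := congrArg (lastL n) hyz
      rw [map_add, map_smul] at this
      simpa [lastL_append1, hyl, tilde, map_smul, smul_eq_mul, lastL_append1] using this.symm
    have ht : t = 0 := by
      have hne : (Real.sqrt (1 + ‖d'‖ ^ 2))⁻¹ ≠ 0 := by positivity
      field_simp at hlast
      linarith
    subst ht
    rw [zero_smul, add_zero] at hyz
    subst hyz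
    -- now v = headL y ∈ span (range u)
    have : headL n (append1 v 0) ∈ Submodule.span ℝ (Set.range u) := by
      refine Submodule.span_induction ?_ ?_ ?_ ?_ hy
      · rintro _ ⟨j, rfl⟩; rw [headL_append1]; exact Submodule.subset_span ⟨j, rfl⟩
      · simp
      · intro a b _ _ ha hb; simp only [map_add]; exact Submodule.add_mem _ ha hb
      · intro r a _ ha; simp only [map_smul]; exact Submodule.smul_mem _ _ ha
    rwa [headL_append1] at this
  · intro h
    have : append1 v 0 = app0L n v := rfl
    rw [this]
    have h2 : app0L n v ∈ (Submodule.span ℝ (Set.range u)).map (app0L n) :=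
      Submodule.mem_map_of_mem h
    rw [Submodule.map_span] at h2
    refine Submodule.span_mono ?_ h2
    rintro _ ⟨_, ⟨j, rfl⟩, rfl⟩
    exact Or.inl ⟨j, rfl⟩

/-- The total projection-residual cost vanishes iff the embedded smaller affine subspace
is contained in the embedded transformed larger affine subspace. -/
theorem affine_registration_cost_eq_zero_iff (n k l : ℕ)
    (hk : 0 < k) (hkl : k ≤ l) (hln : l < n)
    (b : Fin l → EuclideanSpace ℝ (Fin n)) (hb : Orthonormal ℝ b)
    (R : EuclideanSpace ℝ (Fin n) ≃ₗᵢ[ℝ] EuclideanSpace ℝ (Fin n))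
    (d' : EuclideanSpace ℝ (Fin n))
    (a : Fin k → EuclideanSpace ℝ (Fin n)) (ha : Orthonormal ℝ a)
    (c : EuclideanSpace ℝ (Fin n))
    (V : Submodule ℝ (EuclideanSpace ℝ (Fin n)))
    (hV : V = Submodule.span ℝ (Set.range fun j => R (b j)))
    (W : Submodule ℝ (EuclideanSpace ℝ (Fin (n + 1))))
    (hW : W = Submodule.span ℝ (Set.range (fun j => append1 (R (b j)) 0) ∪ {tilde d'})) :
    (∑ i, ‖(V.orthogonalProjection (a i) : EuclideanSpace ℝ (Fin n)) - a i‖ ^ 2) +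
        ‖(W.orthogonalProjection (tilde c) : EuclideanSpace ℝ (Fin (n + 1))) - tilde c‖ ^ 2 = 0
      ↔ Submodule.span ℝ (Set.range (fun i => append1 (a i) 0) ∪ {tilde c}) ≤ W := by
  have hsum : (∑ i, ‖(V.orthogonalProjection (a i) : EuclideanSpace ℝ (Fin n)) - a i‖ ^ 2) +
        ‖(W.orthogonalProjection (tilde c) : EuclideanSpace ℝ (Fin (n + 1))) - tilde c‖ ^ 2 = 0
      ↔ (∀ i, a i ∈ V) ∧ tilde c ∈ W := by
    rw [add_eq_zero_iff_of_nonneg (by positivity) (by positivity)]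
    rw [Finset.sum_eq_zero_iff_of_nonneg (fun i _ => by positivity)]
    constructor
    · rintro ⟨h1, h2⟩
      constructor
      · intro i
        have := h1 i (Finset.mem_univ i)
        rw [pow_eq_zero_iff (by norm_num), norm_eq_zero, sub_eq_zero] at this
        exact (Submodule.starProjection_eq_self_iff).mp this
      · rw [pow_eq_zero_iff (by norm_num), norm_eq_zero, sub_eq_zero] at h2
        exact (Submodule.starProjection_eq_self_iff).mp h2
    · rintro ⟨h1, h2⟩
      constructor
      · intro i _
        rw [pow_eq_zero_iff (by norm_num), norm_eq_zero, sub_eq_zero]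
        exact (Submodule.starProjection_eq_self_iff).mpr (h1 i)
      · rw [pow_eq_zero_iff (by norm_num), norm_eq_zero, sub_eq_zero]
        exact (Submodule.starProjection_eq_self_iff).mpr h2
  rw [hsum]
  rw [Submodule.span_le]
  constructor
  · rintro ⟨h1, h2⟩
    rintro x (⟨i, rfl⟩ | hx)
    · rw [hW]
      exact (mem_W_iff _ d' (a i)).mpr (by rw [← hV]; exact h1 i)
    · rw [Set.mem_singleton_iff] at hx; subst hx; exact h2
  · intro h
    constructor
    · intro i
      have : append1 (a i) 0 ∈ W := h (Or.inl ⟨i, rfl⟩)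
      rw [hW] at this
      rw [hV]
      exact (mem_W_iff _ d' (a i)).mp this
    · exact h (Or.inr rfl)
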